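/- The polynomial x⁸ + 72 is irreducible over ℚ, and its splitting field over ℚ has degree 16. -/

import Mathlib

open Polynomial IntermediateField

noncomputable section X8Aux

namespace X8Aux

/-! ### Generic helpers about adjoining a square root -/

lemma sq_isIntegral {F : Type*} [Field F] [Algebra F ℂ] (x : ℂ) (c : F)
    (hx : x ^ 2 = algebraMap F ℂ c) : IsIntegral F x :=
  ⟨X ^ 2 - C c, monic_X_pow_sub_C _ (by norm_num), by simp [hx]⟩

lemma decomp {F : Type*} [Field F] [Algebra F ℂ] (x : ℂ) (c : F)
    (hx : x ^ 2 = algebraMap F ℂ c) {y : ℂ}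
    (hy : y ∈ IntermediateField.adjoin F ({x} : Set ℂ)) :
    ∃ p q : F, y = algebraMap F ℂ p + algebraMap F ℂ q * x := by
  have hint := sq_isIntegral x c hx
  have h2 : y ∈ Algebra.adjoin F ({x} : Set ℂ) := by
    rw [← IntermediateField.adjoin_simple_toSubalgebra_of_isAlgebraic hint.isAlgebraic]
    exact hy
  refine Algebra.adjoin_induction (fun z hz => ?_) (fun r => ?_)
    (fun a b ha hb iha ihb => ?_) (fun a b ha hb iha ihb => ?_) h2
  · exact ⟨0, 1, by simp [Set.mem_singleton_iff.mp hz]⟩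
  · exact ⟨r, 0, by simp⟩
  · obtain ⟨p, q, rfl⟩ := iha; obtain ⟨p', q', rfl⟩ := ihb
    exact ⟨p + p', q + q', by simp only [map_add]; ring⟩
  · obtain ⟨p, q, rfl⟩ := iha; obtain ⟨p', q', rfl⟩ := ihb
    refine ⟨p * p' + q * q' * c, p * q' + q * p', ?_⟩
    simp only [map_add, map_mul]
    rw [← hx]; ring

lemma unique_coeff {F : Type*} [Field F] [Algebra F ℂ] (x : ℂ)
    (hxn : ∀ p : F, algebraMap F ℂ p ≠ x) (A B A' B' : F)
    (h : algebraMap F ℂ A + algebraMap F ℂ B * x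
        = algebraMap F ℂ A' + algebraMap F ℂ B' * x) :
    A = A' ∧ B = B' := by
  have hinj := (algebraMap F ℂ).injective
  by_cases hB : B = B'
  · subst hB
    refine ⟨hinj ?_, rfl⟩
    exact add_right_cancel h
  · exfalso
    apply hxn ((A' - A) / (B - B'))
    rw [map_div₀, map_sub, map_sub,
      div_eq_iff (sub_ne_zero.mpr (fun hh => hB (hinj hh)))]
    linear_combination -h

lemma finrank_adjoin_sq {F : Type*} [Field F] [Algebra F ℂ] (x : ℂ) (c : F)
    (hx : x ^ 2 = algebraMap F ℂ c) (hxn : ∀ p : F, algebraMap F ℂ p ≠ x) :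
    Module.finrank F (IntermediateField.adjoin F ({x} : Set ℂ)) = 2 := by
  have hint := sq_isIntegral x c hx
  rw [IntermediateField.adjoin.finrank hint]
  have hd : minpoly F x ∣ X ^ 2 - C c := minpoly.dvd _ _ (by simp [hx])
  have h1 : (minpoly F x).natDegree ≤ 2 := by
    have := Polynomial.natDegree_le_of_dvd hd (X_pow_sub_C_ne_zero (by norm_num) c)
    simpa [natDegree_X_pow_sub_C] using this
  have h2 : 2 ≤ (minpoly F x).natDegree :=
    (minpoly.two_le_natDegree_iff hint).mpr (by rintro ⟨p, hp⟩; exact hxn p hp)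
  omega

lemma not_range_of_not_mem {K : IntermediateField ℚ ℂ} {x : ℂ} (h : x ∉ K) :
    ∀ p : ↥K, algebraMap ↥K ℂ p ≠ x := fun p hp => h (hp ▸ p.2)

lemma step_le {K R : IntermediateField ℚ ℂ} {x : ℂ} (hK : K ≤ R) (hx : x ∈ R) :
    (IntermediateField.adjoin ↥K ({x} : Set ℂ)).restrictScalars ℚ ≤ R := by
  erw [IntermediateField.restrictScalars_adjoin]
  exact IntermediateField.adjoin_le_iff.mpr
    (Set.union_subset hK (by simpa using hx))

lemma mem_step (K : IntermediateField ℚ ℂ) (x : ℂ) :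
    x ∈ (IntermediateField.adjoin ↥K ({x} : Set ℂ)).restrictScalars ℚ := by
  erw [IntermediateField.restrictScalars_adjoin]
  exact IntermediateField.subset_adjoin _ _ (Or.inr rfl)

lemma le_step (K : IntermediateField ℚ ℂ) (S : Set ℂ) :
    K ≤ (IntermediateField.adjoin ↥K S).restrictScalars ℚ := by
  erw [IntermediateField.restrictScalars_adjoin]
  exact fun y hy => IntermediateField.subset_adjoin _ _ (Or.inl hy)

lemma six_mem (K : IntermediateField ℚ ℂ) : (6 : ℂ) ∈ K := by
  have := K.algebraMap_mem (6 : ℚ)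
  rwa [map_ofNat] at this

/-! ### The concrete numbers -/

def s : ℂ := (Real.sqrt 2 : ℝ)

def uu : ℂ := Complex.exp ((Real.log 72 + Real.pi * Complex.I) / 8)

def tt : ℂ := uu ^ 2

lemma s_sq : s ^ 2 = 2 := by
  rw [s, ← Complex.ofReal_pow, Real.sq_sqrt (by norm_num : (0:ℝ) ≤ 2)]
  norm_num

lemma s_ne_zero : s ≠ 0 := by
  intro h
  have := s_sq
  rw [h] at this
  norm_num at this

lemma u8 : uu ^ 8 = -72 := by
  rw [uu, ← Complex.exp_nat_mul,
    show (8 : ℕ) * ((Real.log 72 + Real.pi * Complex.I) / 8)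
      = (Real.log 72 : ℂ) + Real.pi * Complex.I by push_cast; ring,
    Complex.exp_add, Complex.exp_pi_mul_I, ← Complex.ofReal_exp,
    Real.exp_log (by norm_num : (0:ℝ) < 72)]
  norm_num

lemma uu_ne_zero : uu ≠ 0 := by
  intro h
  have := u8
  rw [h] at this
  norm_num at this

lemma u4 : uu ^ 4 = 6 * s * Complex.I ∨ uu ^ 4 = -(6 * s * Complex.I) := by
  have h : (uu ^ 4 - 6 * s * Complex.I) * (uu ^ 4 + 6 * s * Complex.I) = 0 := by
    have hI : Complex.I ^ 2 = -1 := Complex.I_sq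
    calc (uu ^ 4 - 6 * s * Complex.I) * (uu ^ 4 + 6 * s * Complex.I)
        = uu ^ 8 - 36 * s ^ 2 * Complex.I ^ 2 := by ring
      _ = -72 - 36 * 2 * (-1) := by rw [u8, s_sq, hI]
      _ = 0 := by norm_num
  rcases mul_eq_zero.mp h with h | h
  · exact Or.inl (sub_eq_zero.mp h)
  · exact Or.inr (eq_neg_of_add_eq_zero_left h)

/-! ### The tower of fields -/

def K1 : IntermediateField ℚ ℂ := IntermediateField.adjoin ℚ ({Complex.I} : Set ℂ)

def K2 : IntermediateField ℚ ℂ :=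
  (IntermediateField.adjoin ↥K1 ({s} : Set ℂ)).restrictScalars ℚ

def K3 : IntermediateField ℚ ℂ :=
  (IntermediateField.adjoin ↥K2 ({tt} : Set ℂ)).restrictScalars ℚ

def K4 : IntermediateField ℚ ℂ :=
  (IntermediateField.adjoin ↥K3 ({uu} : Set ℂ)).restrictScalars ℚ

lemma I_mem_K1 : Complex.I ∈ K1 := IntermediateField.subset_adjoin _ _ rfl

lemma I_sq_eq : Complex.I ^ 2 = algebraMap ℚ ℂ (-1) := by
  simp [Complex.I_sq]

lemma I_not_rat : ∀ p : ℚ, algebraMap ℚ ℂ p ≠ Complex.I := by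
  intro p hp
  have him := congrArg Complex.im hp
  rw [show algebraMap ℚ ℂ p = (p : ℂ) from map_ratCast _ p] at him
  simp [Complex.ratCast_im] at him

lemma rat_sq_ne_two (q : ℚ) : q ^ 2 ≠ 2 := by
  intro h
  have hq : ((q : ℝ)) ^ 2 = 2 := by exact_mod_cast congrArg (fun x : ℚ => (x : ℝ)) h
  have h2 : Real.sqrt 2 = |(q : ℝ)| := by
    rw [← hq, Real.sqrt_sq_eq_abs]
  exact irrational_sqrt_two (h2 ▸ ⟨|q|, by push_cast; rfl⟩)

lemma s_not_K1 : ∀ p : ↥K1, algebraMap ↥K1 ℂ p ≠ s := by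
  rintro ⟨p, hp⟩ hps
  obtain ⟨e, f, hef⟩ := decomp Complex.I (-1 : ℚ) I_sq_eq hp
  have hps' : s = (e : ℂ) + (f : ℂ) * Complex.I := by
    rw [← hps]
    simpa [map_ratCast] using hef
  have him := congrArg Complex.im hps'
  simp [s, Complex.ofReal_im] at him
  have hf0 : f = 0 := by exact_mod_cast him.symm
  rw [hf0] at hps'
  have hse : s = (e : ℂ) := by rw [hps']; push_cast; ring
  have hre : Real.sqrt 2 = (e : ℝ) := by
    have h2 : ((Real.sqrt 2 : ℝ) : ℂ) = ((e : ℝ) : ℂ) := by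
      rw [show ((Real.sqrt 2 : ℝ) : ℂ) = s from rfl, hse]; norm_cast
    exact_mod_cast h2
  exact irrational_sqrt_two ⟨e, hre.symm⟩

lemma s_sq_K1 : s ^ 2 = algebraMap ↥K1 ℂ (2 : ↥K1) := by
  rw [s_sq]; exact (map_ofNat (algebraMap ↥K1 ℂ) 2).symm

lemma I_mem_K2 : Complex.I ∈ K2 := le_step K1 _ I_mem_K1
lemma s_mem_K2 : s ∈ K2 := mem_step K1 s

/-- The key arithmetic fact: `6·√2·i` is not a square in `K2 = ℚ(i, √2)`. -/
lemma key_pos : ∀ x ∈ K2, x ^ 2 ≠ 6 * s * Complex.I := by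
  intro x hx h
  obtain ⟨p, q, rfl⟩ := decomp s (2 : ↥K1) s_sq_K1 hx
  have h6I : (6 : ℂ) * Complex.I ∈ K1 := mul_mem (six_mem K1) I_mem_K1
  have h' : algebraMap ↥K1 ℂ (p ^ 2 + 2 * q ^ 2) + algebraMap ↥K1 ℂ (2 * p * q) * s
      = algebraMap ↥K1 ℂ (0 : ↥K1) + algebraMap ↥K1 ℂ (⟨6 * Complex.I, h6I⟩ : ↥K1) * s := by
    have hc : algebraMap ↥K1 ℂ (⟨6 * Complex.I, h6I⟩ : ↥K1) = 6 * Complex.I := rfl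
    simp only [map_add, map_mul, map_pow, map_ofNat, map_zero, hc]
    linear_combination h - (algebraMap ↥K1 ℂ q) ^ 2 * s_sq
  obtain ⟨hA, hB⟩ := unique_coeff s s_not_K1 _ _ _ _ h'
  have hq0 : q ≠ 0 := by
    rintro rfl
    have := congrArg (algebraMap ↥K1 ℂ) hB
    simp at this
  set r : ↥K1 := p / q with hr
  have hr2 : r ^ 2 = -2 := by
    rw [hr, div_pow, div_eq_iff (pow_ne_zero 2 hq0)]
    linear_combination hA
  obtain ⟨e, f, hef⟩ := decomp Complex.I (-1 : ℚ) I_sq_eq (r : ↥K1).2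
  have hrC : ((r : ℂ)) ^ 2 = -2 := by
    have := congrArg (algebraMap ↥K1 ℂ) hr2
    rw [map_pow, map_neg, map_ofNat] at this
    exact this
  rw [hef] at hrC
  have h'' : algebraMap ℚ ℂ (e ^ 2 - f ^ 2) + algebraMap ℚ ℂ (2 * e * f) * Complex.I
      = algebraMap ℚ ℂ (-2) + algebraMap ℚ ℂ (0 : ℚ) * Complex.I := by
    simp only [map_sub, map_mul, map_pow, map_ofNat, map_zero, map_neg]
    linear_combination hrC - (algebraMap ℚ ℂ f) ^ 2 * Complex.I_sq
  obtain ⟨hA', hB'⟩ := unique_coeff Complex.I I_not_rat _ _ _ _ h''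
  have hef0 : e * f = 0 := by linarith
  rcases mul_eq_zero.mp hef0 with h0 | h0
  · rw [h0] at hA'
    have : f ^ 2 = 2 := by linarith
    exact rat_sq_ne_two f this
  · rw [h0] at hA'
    nlinarith [sq_nonneg e]

lemma key : ∀ x ∈ K2, x ^ 2 ≠ 6 * s * Complex.I ∧ x ^ 2 ≠ -(6 * s * Complex.I) := by
  intro x hx
  refine ⟨key_pos x hx, ?_⟩
  intro h
  apply key_pos (x * Complex.I) (mul_mem hx I_mem_K2)
  have hI : Complex.I ^ 2 = -1 := Complex.I_sq
  calc (x * Complex.I) ^ 2 = x ^ 2 * Complex.I ^ 2 := by ring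
    _ = -(6 * s * Complex.I) * (-1) := by rw [h, hI]
    _ = 6 * s * Complex.I := by ring

lemma u4_mem_K2 : uu ^ 4 ∈ K2 := by
  rcases u4 with h | h <;> rw [h]
  · exact mul_mem (mul_mem (six_mem K2) s_mem_K2) I_mem_K2
  · exact neg_mem (mul_mem (mul_mem (six_mem K2) s_mem_K2) I_mem_K2)

lemma tt_sq_K2 : tt ^ 2 = algebraMap ↥K2 ℂ (⟨uu ^ 4, u4_mem_K2⟩ : ↥K2) := by
  show tt ^ 2 = uu ^ 4
  rw [tt]; ring

lemma tt_not_K2 : ∀ p : ↥K2, algebraMap ↥K2 ℂ p ≠ tt := by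
  intro p hp
  have htK2 : tt ∈ K2 := hp ▸ p.2
  have h2 : tt ^ 2 = uu ^ 4 := by rw [tt]; ring
  rcases u4 with h | h
  · exact (key tt htK2).1 (h2.trans h)
  · exact (key tt htK2).2 (h2.trans h)

lemma tt_mem_K3 : tt ∈ K3 := mem_step K2 tt
lemma K2_le_K3 : K2 ≤ K3 := le_step K2 _

lemma uu_not_K3 : ∀ p : ↥K3, algebraMap ↥K3 ℂ p ≠ uu := by
  intro p hp
  have hu3 : uu ∈ IntermediateField.adjoin ↥K2 ({tt} : Set ℂ) := hp ▸ p.2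
  obtain ⟨a, b, hab⟩ := decomp tt (⟨uu ^ 4, u4_mem_K2⟩ : ↥K2) tt_sq_K2 hu3
  have h' : algebraMap ↥K2 ℂ (a ^ 2 + b ^ 2 * ⟨uu ^ 4, u4_mem_K2⟩)
        + algebraMap ↥K2 ℂ (2 * a * b) * tt
      = algebraMap ↥K2 ℂ (0 : ↥K2) + algebraMap ↥K2 ℂ (1 : ↥K2) * tt := by
    have hc0 : algebraMap ↥K2 ℂ (⟨uu ^ 4, u4_mem_K2⟩ : ↥K2) = uu ^ 4 := rfl
    simp only [map_add, map_mul, map_pow, map_ofNat, map_zero, map_one, hc0]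
    rw [show tt = uu ^ 2 from rfl] at hab ⊢
    linear_combination (uu - algebraMap ↥K2 ℂ a - algebraMap ↥K2 ℂ b * uu ^ 2 - 2 * uu) * hab
  obtain ⟨hA, hB⟩ := unique_coeff tt tt_not_K2 _ _ _ _ h'
  have hb0 : b ≠ 0 := by
    rintro rfl
    simp at hB
  set r : ↥K2 := a / b with hrdef
  have hr2 : r ^ 2 = -⟨uu ^ 4, u4_mem_K2⟩ := by
    rw [hrdef, div_pow, div_eq_iff (pow_ne_zero 2 hb0)]
    linear_combination hA
  have hrC : ((r : ℂ)) ^ 2 = -(uu ^ 4) := by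
    have := congrArg (algebraMap ↥K2 ℂ) hr2
    simpa using this
  rcases u4 with h | h
  · rw [h] at hrC
    exact (key (r : ℂ) r.2).2 hrC
  · rw [h, neg_neg] at hrC
    exact (key (r : ℂ) r.2).1 hrC

/-! ### Degrees -/

lemma uu_mem_K4 : uu ∈ K4 := mem_step K3 uu
lemma K3_le_K4 : K3 ≤ K4 := le_step K3 _

lemma uu_sq_K3 : uu ^ 2 = algebraMap ↥K3 ℂ (⟨tt, tt_mem_K3⟩ : ↥K3) := rfl

instance K1_fd : FiniteDimensional ℚ ↥K1 :=
  IntermediateField.adjoin.finiteDimensional (sq_isIntegral Complex.I (-1 : ℚ) I_sq_eq)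

instance K2_fd' : FiniteDimensional ↥K1 ↥(IntermediateField.adjoin ↥K1 ({s} : Set ℂ)) :=
  IntermediateField.adjoin.finiteDimensional (sq_isIntegral s _ s_sq_K1)

instance K2_fd : FiniteDimensional ℚ ↥K2 :=
  FiniteDimensional.trans ℚ ↥K1 ↥(IntermediateField.adjoin ↥K1 ({s} : Set ℂ))

instance K3_fd' : FiniteDimensional ↥K2 ↥(IntermediateField.adjoin ↥K2 ({tt} : Set ℂ)) :=
  IntermediateField.adjoin.finiteDimensional (sq_isIntegral tt _ tt_sq_K2)

instance K3_fd : FiniteDimensional ℚ ↥K3 :=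
  FiniteDimensional.trans ℚ ↥K2 ↥(IntermediateField.adjoin ↥K2 ({tt} : Set ℂ))

instance K4_fd' : FiniteDimensional ↥K3 ↥(IntermediateField.adjoin ↥K3 ({uu} : Set ℂ)) :=
  IntermediateField.adjoin.finiteDimensional (sq_isIntegral uu _ uu_sq_K3)

instance K4_fd : FiniteDimensional ℚ ↥K4 :=
  FiniteDimensional.trans ℚ ↥K3 ↥(IntermediateField.adjoin ↥K3 ({uu} : Set ℂ))

lemma fin_K1 : Module.finrank ℚ ↥K1 = 2 :=
  finrank_adjoin_sq Complex.I (-1 : ℚ) I_sq_eq I_not_rat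

lemma fin_K2 : Module.finrank ℚ ↥K2 = 4 := by
  have h := Module.finrank_mul_finrank ℚ ↥K1 ↥(IntermediateField.adjoin ↥K1 ({s} : Set ℂ))
  have h2 := finrank_adjoin_sq s (2 : ↥K1) s_sq_K1 s_not_K1
  have : Module.finrank ℚ ↥K2
      = Module.finrank ℚ ↥K1 * Module.finrank ↥K1 ↥(IntermediateField.adjoin ↥K1 ({s} : Set ℂ)) :=
    h.symm
  rw [this, fin_K1, h2]

lemma fin_K3 : Module.finrank ℚ ↥K3 = 8 := by
  have h := Module.finrank_mul_finrank ℚ ↥K2 ↥(IntermediateField.adjoin ↥K2 ({tt} : Set ℂ))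
  have h2 := finrank_adjoin_sq tt _ tt_sq_K2 tt_not_K2
  have : Module.finrank ℚ ↥K3
      = Module.finrank ℚ ↥K2 * Module.finrank ↥K2 ↥(IntermediateField.adjoin ↥K2 ({tt} : Set ℂ)) :=
    h.symm
  rw [this, fin_K2, h2]

lemma fin_K4 : Module.finrank ℚ ↥K4 = 16 := by
  have h := Module.finrank_mul_finrank ℚ ↥K3 ↥(IntermediateField.adjoin ↥K3 ({uu} : Set ℂ))
  have h2 := finrank_adjoin_sq uu _ uu_sq_K3 uu_not_K3
  have : Module.finrank ℚ ↥K4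
      = Module.finrank ℚ ↥K3 * Module.finrank ↥K3 ↥(IntermediateField.adjoin ↥K3 ({uu} : Set ℂ)) :=
    h.symm
  rw [this, fin_K3, h2]

/-! ### The polynomial -/

def f : ℚ[X] := X ^ 8 + 72

lemma f_eq_C : f = X ^ 8 + C (72 : ℚ) := by
  rw [f, map_ofNat]

lemma f_monic : f.Monic := by
  rw [f_eq_C]; exact monic_X_pow_add_C _ (by norm_num)

lemma f_ne_zero : f ≠ 0 := f_monic.ne_zero

lemma f_natDegree : f.natDegree = 8 := by
  rw [f_eq_C]; exact natDegree_X_pow_add_C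

lemma aeval_f (x : ℂ) : (Polynomial.aeval x) f = x ^ 8 + 72 := by
  rw [f_eq_C]; simp

lemma aeval_uu : (Polynomial.aeval uu) f = 0 := by
  rw [aeval_f, u8]; ring

lemma uu_integral : IsIntegral ℚ uu :=
  ⟨f, f_monic, by simpa [Polynomial.aeval_def] using aeval_uu⟩

lemma uu_root_mem : uu ∈ f.rootSet ℂ := by
  rw [Polynomial.mem_rootSet]
  exact ⟨f_ne_zero, aeval_uu⟩

/-! ### Eighth roots of unity lie in K2 -/

lemma zeta_sq : ((1 + Complex.I) / s) ^ 2 = Complex.I := by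
  rw [div_pow]
  rw [div_eq_iff (pow_ne_zero 2 s_ne_zero)]
  linear_combination Complex.I_sq - Complex.I * s_sq

lemma zeta'_sq : ((1 - Complex.I) / s) ^ 2 = -Complex.I := by
  rw [div_pow]
  rw [div_eq_iff (pow_ne_zero 2 s_ne_zero)]
  linear_combination Complex.I_sq + Complex.I * s_sq

lemma zeta_mem : (1 + Complex.I) / s ∈ K2 :=
  div_mem (add_mem (one_mem _) I_mem_K2) s_mem_K2

lemma zeta'_mem : (1 - Complex.I) / s ∈ K2 :=
  div_mem (sub_mem (one_mem _) I_mem_K2) s_mem_K2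

lemma sq_cases {w z : ℂ} (h : w ^ 2 = z ^ 2) : w = z ∨ w = -z := by
  have : (w - z) * (w + z) = 0 := by linear_combination h
  rcases mul_eq_zero.mp this with h' | h'
  · exact Or.inl (sub_eq_zero.mp h')
  · exact Or.inr (eq_neg_of_add_eq_zero_left h')

lemma roots8_mem_K2 (w : ℂ) (hw : w ^ 8 = 1) : w ∈ K2 := by
  have h4 : (w ^ 4 - 1) * (w ^ 4 + 1) = 0 := by linear_combination hw
  rcases mul_eq_zero.mp h4 with h | h
  · have h4' : w ^ 4 = 1 := sub_eq_zero.mp h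
    have h2 : (w ^ 2 - 1) * (w ^ 2 + 1) = 0 := by linear_combination h4'
    rcases mul_eq_zero.mp h2 with h' | h'
    · have : w ^ 2 = 1 ^ 2 := by rw [sub_eq_zero.mp h']; ring
      rcases sq_cases this with rfl | rfl
      · exact one_mem _
      · exact neg_mem (one_mem _)
    · have : w ^ 2 = Complex.I ^ 2 := by
        rw [Complex.I_sq]
        linear_combination h'
      rcases sq_cases this with rfl | rfl
      · exact I_mem_K2
      · exact neg_mem I_mem_K2
  · have h4' : w ^ 4 = -1 := eq_neg_of_add_eq_zero_left h
    have h2 : (w ^ 2 - Complex.I) * (w ^ 2 + Complex.I) = 0 := by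
      linear_combination h4' - Complex.I_sq
    rcases mul_eq_zero.mp h2 with h' | h'
    · have : w ^ 2 = ((1 + Complex.I) / s) ^ 2 := by
        rw [zeta_sq]
        linear_combination h'
      rcases sq_cases this with rfl | rfl
      · exact zeta_mem
      · exact neg_mem zeta_mem
    · have : w ^ 2 = ((1 - Complex.I) / s) ^ 2 := by
        rw [zeta'_sq]
        linear_combination h'
      rcases sq_cases this with rfl | rfl
      · exact zeta'_mem
      · exact neg_mem zeta'_mem

/-! ### The splitting field is K4 -/

lemma rootSet_subset_K4 : f.rootSet ℂ ⊆ (K4 : Set ℂ) := by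
  intro x hx
  rw [Polynomial.mem_rootSet] at hx
  have hx8 : x ^ 8 = -72 := by
    have := hx.2
    rw [aeval_f] at this
    linear_combination this
  have hw : (x / uu) ^ 8 = 1 := by
    rw [div_pow, hx8, u8, div_self (by norm_num : (-72 : ℂ) ≠ 0)]
  have hxw : x = x / uu * uu := (div_mul_cancel₀ x uu_ne_zero).symm
  rw [hxw]
  exact mul_mem ((K2_le_K3.trans K3_le_K4) (roots8_mem_K2 _ hw)) uu_mem_K4

lemma K2_le_adjoin_rootSet :
    K2 ≤ IntermediateField.adjoin ℚ (f.rootSet ℂ) := by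
  set R := IntermediateField.adjoin ℚ (f.rootSet ℂ) with hR
  have huR : uu ∈ R := IntermediateField.subset_adjoin _ _ uu_root_mem
  have hzeta8 : ((1 + Complex.I) / s) ^ 8 = 1 := by
    have h2 := zeta_sq
    calc ((1 + Complex.I) / s) ^ 8 = (((1 + Complex.I) / s) ^ 2) ^ 4 := by ring
      _ = Complex.I ^ 4 := by rw [h2]
      _ = 1 := by rw [show Complex.I ^ 4 = (Complex.I ^ 2) ^ 2 by ring, Complex.I_sq]; norm_num
  have hzne : (1 + Complex.I) / s ≠ 0 := by
    intro h0
    rw [h0] at hzeta8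
    norm_num at hzeta8
  have huzeta : uu * ((1 + Complex.I) / s) ∈ f.rootSet ℂ := by
    rw [Polynomial.mem_rootSet]
    refine ⟨f_ne_zero, ?_⟩
    rw [aeval_f, mul_pow, hzeta8, u8]
    ring
  have hzR : (1 + Complex.I) / s ∈ R := by
    have hcan : uu * ((1 + Complex.I) / s) / uu = (1 + Complex.I) / s :=
      mul_div_cancel_left₀ _ uu_ne_zero
    rw [← hcan]
    exact div_mem (IntermediateField.subset_adjoin _ _ huzeta) huR
  have hIR : Complex.I ∈ R := by
    have := mul_mem hzR hzR
    rw [show (1 + Complex.I) / s * ((1 + Complex.I) / s) = ((1 + Complex.I) / s) ^ 2 by ring,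
      zeta_sq] at this
    exact this
  have hsR : s ∈ R := by
    have h1I : (1 + Complex.I) ≠ 0 := by
      intro h0
      have := congrArg Complex.im h0
      simp at this
    have : s = (1 + Complex.I) / ((1 + Complex.I) / s) := by
      rw [div_div_eq_mul_div, mul_comm, mul_div_assoc, div_self h1I, mul_one]
    rw [this]
    exact div_mem (add_mem (one_mem _) hIR) hzR
  have hK1R : K1 ≤ R := IntermediateField.adjoin_le_iff.mpr (by simpa using hIR)
  exact step_le hK1R hsR

lemma adjoin_rootSet_eq_K4 :
    IntermediateField.adjoin ℚ (f.rootSet ℂ) = K4 := by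
  apply le_antisymm
  · exact IntermediateField.adjoin_le_iff.mpr rootSet_subset_K4
  · have h2 : K2 ≤ IntermediateField.adjoin ℚ (f.rootSet ℂ) := K2_le_adjoin_rootSet
    have huR : uu ∈ IntermediateField.adjoin ℚ (f.rootSet ℂ) :=
      IntermediateField.subset_adjoin _ _ uu_root_mem
    have h3 : K3 ≤ IntermediateField.adjoin ℚ (f.rootSet ℂ) :=
      step_le h2 (by rw [tt]; exact pow_mem huR 2)
    exact step_le h3 huR

/-! ### The minimal polynomial of uu is f -/

def QU : IntermediateField ℚ ℂ := IntermediateField.adjoin ℚ ({uu} : Set ℂ)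

lemma uu_mem_QU : uu ∈ QU := IntermediateField.subset_adjoin _ _ rfl

lemma I_sq_QU : Complex.I ^ 2 = algebraMap ↥QU ℂ (-1 : ↥QU) := by
  simp [Complex.I_sq]

lemma K4_eq_QU_I : K4 = (IntermediateField.adjoin ↥QU ({Complex.I} : Set ℂ)).restrictScalars ℚ := by
  set R := (IntermediateField.adjoin ↥QU ({Complex.I} : Set ℂ)).restrictScalars ℚ with hRdef
  have hQUR : QU ≤ R := le_step QU _
  have huR : uu ∈ R := hQUR uu_mem_QU
  have hIR : Complex.I ∈ R := mem_step QU Complex.I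
  have h6I0 : (6 : ℂ) * Complex.I ≠ 0 := mul_ne_zero (by norm_num) Complex.I_ne_zero
  have hred : 6 * s * Complex.I / (6 * Complex.I) = s := by
    rw [div_eq_iff h6I0]; ring
  have hsR : s ∈ R := by
    rcases u4 with h | h
    · have hse : s = uu ^ 4 / (6 * Complex.I) := by rw [h]; exact hred.symm
      rw [hse]
      exact div_mem (pow_mem huR 4) (mul_mem (six_mem R) hIR)
    · have hse : s = -(uu ^ 4) / (6 * Complex.I) := by
        rw [h, neg_neg]; exact hred.symm
      rw [hse]
      exact div_mem (neg_mem (pow_mem huR 4)) (mul_mem (six_mem R) hIR)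
  apply le_antisymm
  · have hK1R : K1 ≤ R := IntermediateField.adjoin_le_iff.mpr (by simpa using hIR)
    have hK2R : K2 ≤ R := step_le hK1R hsR
    have hK3R : K3 ≤ R := step_le hK2R (by rw [tt]; exact pow_mem huR 2)
    exact step_le hK3R huR
  · refine step_le ?_ (K3_le_K4 (K2_le_K3 I_mem_K2))
    exact IntermediateField.adjoin_le_iff.mpr (by simpa using uu_mem_K4)

instance QU_fd : FiniteDimensional ℚ ↥QU :=
  IntermediateField.adjoin.finiteDimensional uu_integral

instance QUI_fd' : FiniteDimensional ↥QU ↥(IntermediateField.adjoin ↥QU ({Complex.I} : Set ℂ)) :=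
  IntermediateField.adjoin.finiteDimensional (sq_isIntegral Complex.I _ I_sq_QU)

lemma minpoly_natDegree_le : (minpoly ℚ uu).natDegree ≤ 8 := by
  have hd : minpoly ℚ uu ∣ f := minpoly.dvd _ _ aeval_uu
  have := Polynomial.natDegree_le_of_dvd hd f_ne_zero
  rwa [f_natDegree] at this

set_option synthInstance.maxHeartbeats 400000 in
lemma finrank_QU : Module.finrank ℚ ↥QU = 8 := by
  have h16 : Module.finrank ℚ ↥((IntermediateField.adjoin ↥QU
      ({Complex.I} : Set ℂ)).restrictScalars ℚ) = 16 := by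
    rw [← K4_eq_QU_I]; exact fin_K4
  have hmul : Module.finrank ℚ ↥QU *
      Module.finrank ↥QU ↥(IntermediateField.adjoin ↥QU ({Complex.I} : Set ℂ)) = 16 := by
    rw [Module.finrank_mul_finrank ℚ ↥QU ↥(IntermediateField.adjoin ↥QU ({Complex.I} : Set ℂ))]
    exact h16
  have hintI : IsIntegral ↥QU Complex.I := sq_isIntegral Complex.I _ I_sq_QU
  have hb : Module.finrank ↥QU ↥(IntermediateField.adjoin ↥QU ({Complex.I} : Set ℂ)) ≤ 2 := by
    rw [IntermediateField.adjoin.finrank hintI]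
    have hd : minpoly ↥QU Complex.I ∣ X ^ 2 - C (-1 : ↥QU) :=
      minpoly.dvd _ _ (by simp [I_sq_QU])
    have := Polynomial.natDegree_le_of_dvd hd (X_pow_sub_C_ne_zero (by norm_num) _)
    rwa [natDegree_X_pow_sub_C] at this
  have ha : Module.finrank ℚ ↥QU ≤ 8 := by
    show Module.finrank ℚ ↥(IntermediateField.adjoin ℚ ({uu} : Set ℂ)) ≤ 8
    rw [IntermediateField.adjoin.finrank uu_integral]
    exact minpoly_natDegree_le
  set a := Module.finrank ℚ ↥QU
  set b := Module.finrank ↥QU ↥(IntermediateField.adjoin ↥QU ({Complex.I} : Set ℂ))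
  interval_cases b <;> omega

lemma minpoly_uu_natDegree : (minpoly ℚ uu).natDegree = 8 := by
  rw [← IntermediateField.adjoin.finrank uu_integral]
  exact finrank_QU

lemma minpoly_uu_eq_f : minpoly ℚ uu = f := by
  have hd : minpoly ℚ uu ∣ f := minpoly.dvd _ _ aeval_uu
  obtain ⟨g, hg⟩ := hd
  have hmne : minpoly ℚ uu ≠ 0 := minpoly.ne_zero uu_integral
  have hgne : g ≠ 0 := by
    rintro rfl
    rw [mul_zero] at hg
    exact f_ne_zero hg
  have hdeg : g.natDegree = 0 := by
    have := congrArg Polynomial.natDegree hg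
    rw [Polynomial.natDegree_mul hmne hgne, f_natDegree, minpoly_uu_natDegree] at this
    omega
  have hlc : g.leadingCoeff = 1 := by
    have := congrArg Polynomial.leadingCoeff hg
    rw [Polynomial.leadingCoeff_mul, f_monic.leadingCoeff,
      (minpoly.monic uu_integral).leadingCoeff, one_mul] at this
    exact this.symm
  have hg1 : g = 1 := by
    rw [Polynomial.eq_C_of_natDegree_eq_zero hdeg]
    rw [Polynomial.eq_C_of_natDegree_eq_zero hdeg] at hlc
    rw [Polynomial.leadingCoeff_C] at hlc
    rw [hlc, map_one]
  rw [hg, hg1, mul_one]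

lemma f_irreducible : Irreducible f := minpoly_uu_eq_f ▸ minpoly.irreducible uu_integral

lemma finrank_splittingField : Module.finrank ℚ f.SplittingField = 16 := by
  have hsplit : (f.map (algebraMap ℚ ℂ)).Splits := IsAlgClosed.splits _
  haveI : Polynomial.IsSplittingField ℚ
      ↥(IntermediateField.adjoin ℚ (f.rootSet ℂ)) f :=
    IntermediateField.adjoin_rootSet_isSplittingField hsplit
  have e := (Polynomial.IsSplittingField.algEquiv
    ↥(IntermediateField.adjoin ℚ (f.rootSet ℂ)) f).toLinearEquiv
  rw [← e.finrank_eq, adjoin_rootSet_eq_K4]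
  exact fin_K4

end X8Aux

end X8Aux

/-- The polynomial `x⁸ + 72` is irreducible over `ℚ`, and its splitting field
over `ℚ` has degree 16. -/
theorem x8_add_72_irreducible_splitting_degree :
    Irreducible (X ^ 8 + 72 : ℚ[X]) ∧
    Module.finrank ℚ (X ^ 8 + 72 : ℚ[X]).SplittingField = 16 := by
  exact ⟨X8Aux.f_irreducible, X8Aux.finrank_splittingField⟩
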